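/- arXiv:2404.04512 — 2 statements merged into one kernel-verified Lean document; each statement's English description precedes it below -/
import Mathlib

section
/- Let n be a positive integer, m ≥ n, and suppose rational coefficients b_λ (for partitions λ of n) and c_α (for compositions α of n) satisfy Σ_{λ ⊢ n} b_λ s_λ(x1,…,xm) = Σ_{α ⊨ n} c_α F_α(x1,…,xm), with not all c_α zero. If ν is the lexicographically greatest composition of n with c_ν ≠ 0, then ν is a partition and b_ν = c_ν. -/
/-- A semistandard Young tableau (French notation) of shape given by the list `l` of row
lengths (row `0` is the bottom row).  Entries are positive integers; rows weakly increase
from left to right and columns strictly increase from bottom to top (entries outside the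
shape are recorded as `0`). -/
structure SSYT (l : List ℕ) where
  entry : ℕ → ℕ → ℕ
  pos : ∀ i j, j < l.getD i 0 → 1 ≤ entry i j
  zeros : ∀ i j, ¬ j < l.getD i 0 → entry i j = 0
  rowWeak : ∀ i j1 j2, j1 ≤ j2 → j2 < l.getD i 0 → entry i j1 ≤ entry i j2
  colStrict : ∀ i1 i2 j, i1 < i2 → j < l.getD i2 0 → entry i1 j < entry i2 j

/-- The cells of the Young diagram of `l`. -/
def cellsOf (l : List ℕ) : Finset (ℕ × ℕ) :=
  (Finset.range l.length).biUnion fun i =>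
    (Finset.range (l.getD i 0)).image fun j => (i, j)

/-- The number of entries of `T` equal to `k`. -/
def wtOf {l : List ℕ} (T : SSYT l) (k : ℕ) : ℕ :=
  ((cellsOf l).filter fun c => T.entry c.1 c.2 = k).card

/-- A tableau is quasi-Yamanouchi if whenever a value `k > 1` appears, some entry equal
to `k` lies in a strictly higher row than some entry equal to `k - 1`. -/
def IsQYT {l : List ℕ} (T : SSYT l) : Prop :=
  ∀ k, 2 ≤ k → (∃ c ∈ cellsOf l, T.entry c.1 c.2 = k) →
    ∃ c ∈ cellsOf l, ∃ c' ∈ cellsOf l,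
      T.entry c.1 c.2 = k ∧ T.entry c'.1 c'.2 = k - 1 ∧ c'.1 < c.1

/-- `QK l α` : the number of quasi-Yamanouchi tableaux of shape `l` and weight `α`. -/
noncomputable def QK (l α : List ℕ) : ℕ :=
  Set.ncard {T : SSYT l | IsQYT T ∧ ∀ i, wtOf T (i + 1) = α.getD i 0}

/-- `l` is (the list of parts of) a partition of `n`. -/
def IsPartitionOf (n : ℕ) (l : List ℕ) : Prop :=
  l.Pairwise (· ≥ ·) ∧ (∀ x ∈ l, 0 < x) ∧ l.sum = n

/-- `l` is (the list of parts of) a composition of `n`. -/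
def IsCompositionOf (n : ℕ) (l : List ℕ) : Prop :=
  (∀ x ∈ l, 0 < x) ∧ l.sum = n

/-- The number of semistandard Young tableaux of shape `l` with entries in `{1,…,m}` and
exactly `d v` entries equal to `v + 1`. -/
noncomputable def ssytCount (m : ℕ) (l : List ℕ) (d : Fin m → ℕ) : ℕ :=
  Set.ncard {T : SSYT l | (∀ c ∈ cellsOf l, T.entry c.1 c.2 ≤ m) ∧
    ∀ v : Fin m, wtOf T ((v : ℕ) + 1) = d v}

open MvPolynomial in
/-- The Schur polynomial `s_l(x_1,…,x_m)`: the weight generating function of semistandard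
Young tableaux of shape `l` with entries in `{1,…,m}`. -/
noncomputable def schurPoly (m : ℕ) (l : List ℕ) : MvPolynomial (Fin m) ℚ :=
  ∑ d : Fin m → Fin (l.sum + 1),
    (ssytCount m l (fun v => (d v : ℕ)) : ℚ) • ∏ v : Fin m, X v ^ ((d v : ℕ))

/-- The descent set `{α₁, α₁+α₂, …, α₁+⋯+α_{k-1}}` of a composition `α` with `k` parts. -/
def descentSet (α : List ℕ) : Finset ℕ :=
  (Finset.range (α.length - 1)).image fun k => (α.take (k + 1)).sum

open MvPolynomial in
/-- The fundamental quasisymmetric polynomial `F_α(x_1,…,x_m)`: the sum of the monomials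
`x_{i₁} ⋯ x_{i_n}` over weakly increasing sequences `1 ≤ i₁ ≤ ⋯ ≤ i_n ≤ m` (coded by
`f : Fin n → Fin m`, `n = α.sum`) which increase strictly at the positions of the descent
set of `α`. -/
noncomputable def Fqs (m : ℕ) (α : List ℕ) : MvPolynomial (Fin m) ℚ :=
  ∑ f ∈ Finset.univ.filter (fun f : Fin α.sum → Fin m =>
      (∀ p q : Fin α.sum, p ≤ q → f p ≤ f q) ∧
      (∀ p q : Fin α.sum, (p : ℕ) + 1 = (q : ℕ) → ((p : ℕ) + 1) ∈ descentSet α → f p < f q)),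
    ∏ p : Fin α.sum, X (f p)

instance (n : ℕ) : DecidableEq (Composition n) := fun a b =>
  decidable_of_iff (a.blocks = b.blocks) (by
    constructor
    · intro h; ext1; exact h
    · intro h; rw [h])

/-- The partitions of `n`, realized as compositions of `n` with weakly decreasing parts. -/
abbrev PartitionList (n : ℕ) := {c : Composition n // c.blocks.Pairwise (· ≥ ·)}

open Finset

lemma SSYT.ext' {l : List ℕ} {T U : SSYT l} (h : T.entry = U.entry) : T = U := by
  cases T; cases U; cases h; rfl

lemma mem_cellsOf {l : List ℕ} {c : ℕ × ℕ} : c ∈ cellsOf l ↔ c.2 < l.getD c.1 0 := by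
  obtain ⟨i, j⟩ := c
  simp only [cellsOf, Finset.mem_biUnion, Finset.mem_range, Finset.mem_image]
  constructor
  · rintro ⟨i', hi', j', hj', h⟩
    obtain ⟨rfl, rfl⟩ := Prod.mk.injEq .. ▸ h
    exact hj'
  · intro h
    have hi : i < l.length := by
      by_contra hx
      rw [List.getD_eq_default _ _ (le_of_not_gt hx)] at h
      exact absurd h (Nat.not_lt_zero j)
    exact ⟨i, hi, j, h, rfl⟩

lemma take_sum_eq (l : List ℕ) (j : ℕ) :
    (l.take j).sum = ∑ i ∈ range j, l.getD i 0 := by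
  induction l generalizing j with
  | nil => simp
  | cons x xs ih =>
    cases j with
    | zero => simp
    | succ j =>
      rw [List.take_succ_cons, List.sum_cons, Finset.sum_range_succ', ih]
      simp [add_comm]

lemma card_cellsOf (l : List ℕ) : (cellsOf l).card = l.sum := by
  rw [cellsOf, Finset.card_biUnion]
  · have : ∀ i ∈ range l.length,
        ((Finset.range (l.getD i 0)).image fun j => (i, j)).card = l.getD i 0 := by
      intro i _
      rw [Finset.card_image_of_injective _ (fun a b h => (Prod.mk.injEq .. ▸ h).2), card_range]
    rw [Finset.sum_congr rfl this, ← take_sum_eq, List.take_length]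
  · intro i _ i' _ hne
    simp only [Finset.disjoint_left, Finset.mem_image, Finset.mem_range]
    rintro ⟨a, b⟩ ⟨j, _, h⟩ ⟨j', _, h'⟩
    obtain ⟨rfl, rfl⟩ := Prod.mk.injEq .. ▸ h
    obtain ⟨rfl, rfl⟩ := Prod.mk.injEq .. ▸ h'
    exact hne rfl

lemma getD_antitone {l : List ℕ} (hs : l.Pairwise (· ≥ ·)) {i i' : ℕ} (h : i ≤ i')
    (hi' : i' < l.length) : l.getD i' 0 ≤ l.getD i 0 := by
  rcases eq_or_lt_of_le h with rfl | h
  · exact le_rfl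
  · rw [List.getD_eq_getElem _ _ hi', List.getD_eq_getElem _ _ (h.trans hi')]
    exact List.pairwise_iff_getElem.mp hs i i' _ _ h

lemma entry_lower_bound {l : List ℕ} (hs : l.Pairwise (· ≥ ·)) (T : SSYT l) :
    ∀ i j, j < l.getD i 0 → i + 1 ≤ T.entry i j := by
  intro i
  induction i with
  | zero => exact fun j h => T.pos 0 j h
  | succ i ih =>
    intro j h
    have hlen : i + 1 < l.length := by
      by_contra hx
      rw [List.getD_eq_default _ _ (le_of_not_gt hx)] at h
      exact absurd h (Nat.not_lt_zero j)
    have hij : j < l.getD i 0 := lt_of_lt_of_le h (getD_antitone hs (Nat.le_succ i) hlen)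
    exact (ih j hij).trans_lt (T.colStrict i (i + 1) j (Nat.lt_succ_self i) h)

lemma filter_row_lt {l : List ℕ} (j : ℕ) :
    (cellsOf l).filter (fun c => c.1 < j) = cellsOf (l.take j) := by
  ext ⟨i, k⟩
  simp only [Finset.mem_filter, mem_cellsOf]
  constructor
  · rintro ⟨h, hij⟩
    have hi : i < l.length := by
      by_contra hx
      rw [List.getD_eq_default _ _ (le_of_not_gt hx)] at h
      exact absurd h (Nat.not_lt_zero k)
    rw [List.getD_eq_getElem _ _ hi] at h
    rwa [List.getD_eq_getElem _ _ (by simp [List.length_take]; omega), List.getElem_take]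
  · intro h
    have hi : i < (l.take j).length := by
      by_contra hx
      rw [List.getD_eq_default _ _ (le_of_not_gt hx)] at h
      exact absurd h (Nat.not_lt_zero k)
    have hij : i < j := lt_of_lt_of_le hi (by simp [List.length_take])
    refine ⟨?_, hij⟩
    rw [List.getD_eq_getElem _ _ hi, List.getElem_take] at h
    rwa [List.getD_eq_getElem _ _ (by have := hi; simp [List.length_take] at this; omega)]

lemma sum_wt_eq {l : List ℕ} (T : SSYT l) (j : ℕ) :
    ∑ k ∈ range j, wtOf T (k + 1)
      = ((cellsOf l).filter fun c => T.entry c.1 c.2 ≤ j).card := by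
  induction j with
  | zero =>
    rw [Finset.sum_range_zero, Finset.filter_false_of_mem, Finset.card_empty]
    intro c hc
    have := T.pos c.1 c.2 (mem_cellsOf.mp hc)
    omega
  | succ j ih =>
    rw [Finset.sum_range_succ, ih, wtOf]
    have hsplit : ((cellsOf l).filter fun c => T.entry c.1 c.2 ≤ j + 1)
        = ((cellsOf l).filter fun c => T.entry c.1 c.2 ≤ j)
          ∪ ((cellsOf l).filter fun c => T.entry c.1 c.2 = j + 1) := by
      rw [← Finset.filter_or]
      apply Finset.filter_congr
      intro c _
      constructor
      · intro h; omega
      · intro h; omega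
    rw [hsplit, Finset.card_union_of_disjoint]
    simp only [Finset.disjoint_left, Finset.mem_filter]
    rintro c ⟨_, h1⟩ ⟨_, h2⟩
    omega

lemma sum_wt_le {l : List ℕ} (hs : l.Pairwise (· ≥ ·)) (T : SSYT l) (j : ℕ) :
    ∑ k ∈ range j, wtOf T (k + 1) ≤ (l.take j).sum := by
  rw [sum_wt_eq]
  calc ((cellsOf l).filter fun c => T.entry c.1 c.2 ≤ j).card
      ≤ ((cellsOf l).filter fun c => c.1 < j).card := by
        apply Finset.card_le_card
        intro c hc
        rw [Finset.mem_filter] at hc ⊢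
        refine ⟨hc.1, ?_⟩
        have := entry_lower_bound hs T c.1 c.2 (mem_cellsOf.mp hc.1)
        omega
    _ = (l.take j).sum := by rw [filter_row_lt, card_cellsOf]

lemma lex_partial_sum : ∀ {u w : List ℕ}, List.Lex (· < ·) u w → (∀ x ∈ w, 0 < x) →
    ∃ j, j < w.length ∧ (u.take (j + 1)).sum < (w.take (j + 1)).sum := by
  intro u w hlex
  induction hlex with
  | nil =>
    intro hw
    refine ⟨0, by simp, ?_⟩
    simpa using hw _ (List.mem_cons_self ..)
  | @rel a l₁ b l₂ h =>
    intro hw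
    exact ⟨0, by simp, by simpa using h⟩
  | @cons a l₁ l₂ h ih =>
    intro hw
    obtain ⟨j, hj, hlt⟩ := ih (fun x hx => hw x (List.mem_cons_of_mem _ hx))
    refine ⟨j + 1, by simpa using hj, ?_⟩
    simpa using hlt

lemma ssytCount_eq_zero {m : ℕ} {l α : List ℕ} (hs : l.Pairwise (· ≥ ·))
    (hα : ∀ x ∈ α, 0 < x) (hlm : α.length ≤ m)
    (hlex : List.Lex (· < ·) l α) :
    ssytCount m l (fun v => α.getD v 0) = 0 := by
  have hempty : {T : SSYT l | (∀ c ∈ cellsOf l, T.entry c.1 c.2 ≤ m) ∧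
      ∀ v : Fin m, wtOf T ((v : ℕ) + 1) = α.getD v 0} = (∅ : Set (SSYT l)) := by
    ext T
    simp only [Set.mem_setOf_eq, Set.mem_empty_iff_false, iff_false, not_and]
    intro _ hTw
    obtain ⟨j, hj, hlt⟩ := lex_partial_sum hlex hα
    have hjm : j + 1 ≤ m := le_trans hj hlm
    have h1 : ∑ k ∈ range (j + 1), wtOf T (k + 1) = (α.take (j + 1)).sum := by
      rw [take_sum_eq]
      apply Finset.sum_congr rfl
      intro k hk
      rw [Finset.mem_range] at hk
      exact hTw ⟨k, by omega⟩
    have h2 := sum_wt_le hs T (j + 1)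
    omega
  rw [ssytCount, hempty, Set.ncard_empty]

noncomputable def topT (l : List ℕ) (hs : l.Pairwise (· ≥ ·)) : SSYT l where
  entry := fun i j => if j < l.getD i 0 then i + 1 else 0
  pos := fun i j h => by show 1 ≤ if j < l.getD i 0 then i + 1 else 0; rw [if_pos h]; omega
  zeros := fun i j h => by show (if j < l.getD i 0 then i + 1 else 0) = 0; rw [if_neg h]
  rowWeak := fun i j1 j2 h12 h2 => by
    have h1 : j1 < l.getD i 0 := lt_of_le_of_lt h12 h2
    show (if j1 < l.getD i 0 then i + 1 else 0) ≤ if j2 < l.getD i 0 then i + 1 else 0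
    rw [if_pos h1, if_pos h2]
  colStrict := fun i1 i2 j h12 h2 => by
    have hlen : i2 < l.length := by
      by_contra hx
      rw [List.getD_eq_default _ _ (le_of_not_gt hx)] at h2
      exact absurd h2 (Nat.not_lt_zero j)
    have h1 : j < l.getD i1 0 := lt_of_lt_of_le h2 (getD_antitone hs h12.le hlen)
    show (if j < l.getD i1 0 then i1 + 1 else 0) < if j < l.getD i2 0 then i2 + 1 else 0
    rw [if_pos h1, if_pos h2]
    omega

lemma wt_topT (l : List ℕ) (hs : l.Pairwise (· ≥ ·)) (k : ℕ) :
    wtOf (topT l hs) (k + 1) = l.getD k 0 := by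
  rw [wtOf]
  have : (cellsOf l).filter (fun c => (topT l hs).entry c.1 c.2 = k + 1)
      = (Finset.range (l.getD k 0)).image fun j => (k, j) := by
    ext ⟨i, j⟩
    simp only [Finset.mem_filter, mem_cellsOf, Finset.mem_image, Finset.mem_range]
    simp only [topT]
    constructor
    · rintro ⟨hc, he⟩
      rw [if_pos hc] at he
      have : i = k := by omega
      subst this
      exact ⟨j, hc, rfl⟩
    · rintro ⟨j', hj', h⟩
      obtain ⟨rfl, rfl⟩ := Prod.mk.injEq .. ▸ h
      exact ⟨hj', by rw [if_pos hj']⟩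
  rw [this, Finset.card_image_of_injective _ (fun a b h => (Prod.mk.injEq .. ▸ h).2),
    card_range]

lemma ssytCount_self {m : ℕ} {l : List ℕ} (hs : l.Pairwise (· ≥ ·)) (hm : l.length ≤ m) :
    ssytCount m l (fun v => l.getD v 0) = 1 := by
  have hset : {T : SSYT l | (∀ c ∈ cellsOf l, T.entry c.1 c.2 ≤ m) ∧
      ∀ v : Fin m, wtOf T ((v : ℕ) + 1) = l.getD v 0} = {topT l hs} := by
    ext T
    simp only [Set.mem_setOf_eq, Set.mem_singleton_iff]
    constructor
    · rintro ⟨hTm, hTw⟩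
      have key : ∀ c ∈ cellsOf l, T.entry c.1 c.2 = c.1 + 1 := by
        by_contra hx
        push_neg at hx
        obtain ⟨⟨i0, j0⟩, hc0, hne⟩ := hx
        have hcell : j0 < l.getD i0 0 := mem_cellsOf.mp hc0
        have hlo := entry_lower_bound hs T i0 j0 hcell
        have hne' : T.entry i0 j0 ≠ i0 + 1 := hne
        have hge : i0 + 2 ≤ T.entry i0 j0 := by omega
        have hi0len : i0 < l.length := by
          by_contra hxx
          rw [List.getD_eq_default _ _ (le_of_not_gt hxx)] at hcell
          exact absurd hcell (Nat.not_lt_zero j0)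
        have hA : ∑ k ∈ range (i0 + 1), wtOf T (k + 1) = (l.take (i0 + 1)).sum := by
          rw [take_sum_eq]
          apply Finset.sum_congr rfl
          intro k hk
          rw [Finset.mem_range] at hk
          exact hTw ⟨k, by omega⟩
        have hmem : (i0, j0) ∈ (cellsOf l).filter (fun c => c.1 < i0 + 1) := by
          rw [Finset.mem_filter]
          exact ⟨mem_cellsOf.mpr hcell, Nat.lt_succ_self i0⟩
        have hsub : (cellsOf l).filter (fun c => T.entry c.1 c.2 ≤ i0 + 1)
            ⊆ ((cellsOf l).filter (fun c => c.1 < i0 + 1)).erase (i0, j0) := by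
          intro c hc
          rw [Finset.mem_filter] at hc
          rw [Finset.mem_erase, Finset.mem_filter]
          have hlo' := entry_lower_bound hs T c.1 c.2 (mem_cellsOf.mp hc.1)
          refine ⟨?_, hc.1, by omega⟩
          rintro rfl
          exact absurd hc.2 (by omega)
        have hcards := Finset.card_le_card hsub
        rw [Finset.card_erase_of_mem hmem, filter_row_lt, card_cellsOf] at hcards
        rw [sum_wt_eq] at hA
        have hpos : 0 < (l.take (i0 + 1)).sum := by
          rw [take_sum_eq]
          have : l.getD i0 0 ≤ ∑ i ∈ range (i0 + 1), l.getD i 0 :=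
            Finset.single_le_sum (f := fun i => l.getD i 0) (fun i _ => Nat.zero_le _)
              (Finset.self_mem_range_succ i0)
          omega
        omega
      apply SSYT.ext'
      funext i j
      by_cases h : j < l.getD i 0
      · rw [key (i, j) (mem_cellsOf.mpr h)]
        simp only [topT]
        rw [if_pos h]
      · rw [T.zeros i j h]
        simp only [topT]
        rw [if_neg h]
    · rintro rfl
      refine ⟨?_, fun v => wt_topT l hs v⟩
      intro c hc
      have hcell := mem_cellsOf.mp hc
      have hi : c.1 < l.length := by
        by_contra hx
        rw [List.getD_eq_default _ _ (le_of_not_gt hx)] at hcell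
        exact absurd hcell (Nat.not_lt_zero c.2)
      simp only [topT, if_pos hcell]
      omega
  rw [ssytCount, hset, Set.ncard_singleton]

lemma mem_descentSet {a : List ℕ} {s : ℕ} :
    s ∈ descentSet a ↔ ∃ k, k < a.length - 1 ∧ (a.take (k + 1)).sum = s := by
  simp [descentSet]

lemma descentSet_nil : descentSet [] = ∅ := rfl

lemma descentSet_single (x : ℕ) : descentSet [x] = ∅ := rfl

lemma descentSet_cons (x : ℕ) (a : List ℕ) (ha : a ≠ []) :
    descentSet (x :: a) = insert x ((descentSet a).image (x + ·)) := by
  have hlen : 0 < a.length := List.length_pos_iff.mpr ha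
  ext s
  rw [mem_descentSet, Finset.mem_insert, Finset.mem_image]
  constructor
  · rintro ⟨k, hk, rfl⟩
    simp only [List.length_cons, Nat.add_sub_cancel] at hk
    cases k with
    | zero => left; simp
    | succ j =>
      right
      refine ⟨(a.take (j + 1)).sum, mem_descentSet.mpr ⟨j, by omega, rfl⟩, ?_⟩
      simp
  · rintro (rfl | ⟨t, ht, rfl⟩)
    · exact ⟨0, by simpa using hlen, by simp⟩
    · obtain ⟨j, hj, rfl⟩ := mem_descentSet.mp ht
      exact ⟨j + 1, by simp; omega, by simp⟩

lemma pos_sum_of_ne_nil {l : List ℕ} (h : l ≠ []) (hl : ∀ x ∈ l, 0 < x) : 0 < l.sum := by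
  cases l with
  | nil => exact absurd rfl h
  | cons x xs =>
    have := hl x (List.mem_cons_self ..)
    simp only [List.sum_cons]
    omega

lemma descentSet_mem_bounds {a : List ℕ} (ha : ∀ x ∈ a, 0 < x) {s : ℕ}
    (hs : s ∈ descentSet a) : 0 < s ∧ s < a.sum := by
  obtain ⟨k, hk, rfl⟩ := mem_descentSet.mp hs
  have hklen : k + 1 < a.length := by omega
  constructor
  · apply pos_sum_of_ne_nil
    · intro h
      rcases List.take_eq_nil_iff.mp h with h' | h'
      · omega
      · subst h'; simp at hklen
    · exact fun x hx => ha x (List.mem_of_mem_take hx)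
  · conv_rhs => rw [← List.take_append_drop (k + 1) a]
    rw [List.sum_append]
    have : 0 < (a.drop (k + 1)).sum := by
      apply pos_sum_of_ne_nil
      · intro h
        have := congrArg List.length h
        simp [List.length_drop] at this
        omega
      · exact fun x hx => ha x (List.mem_of_mem_drop hx)
    omega

lemma take_sum_strictMono {a : List ℕ} (ha : ∀ x ∈ a, 0 < x) {k1 k2 : ℕ}
    (h : k1 < k2) (h2 : k2 < a.length) :
    (a.take (k1 + 1)).sum < (a.take (k2 + 1)).sum := by
  rw [take_sum_eq, take_sum_eq]
  apply Finset.sum_lt_sum_of_subset (by simp [Finset.range_subset]; omega)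
    (i := k1 + 1) (by simp; omega) (by simp) ?_ (fun j _ _ => Nat.zero_le _)
  have hlt : k1 + 1 < a.length := by omega
  rw [List.getD_eq_getElem _ _ hlt]
  exact ha _ (List.getElem_mem _)

lemma card_descentSet {a : List ℕ} (ha : ∀ x ∈ a, 0 < x) :
    (descentSet a).card = a.length - 1 := by
  rw [descentSet, Finset.card_image_of_injOn, Finset.card_range]
  intro k1 hk1 k2 hk2 heq
  simp only [Finset.coe_range, Set.mem_Iio] at hk1 hk2
  by_contra hne
  rcases Nat.lt_or_ge k1 k2 with h | h
  · exact absurd heq (Nat.ne_of_lt (take_sum_strictMono ha h (by omega)))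
  · have h' : k2 < k1 := by omega
    exact absurd heq.symm (Nat.ne_of_lt (take_sum_strictMono ha h' (by omega)))

lemma descent_subset_lex (w : List ℕ) : ∀ (u : List ℕ), (∀ x ∈ u, 0 < x) →
    (∀ x ∈ w, 0 < x) → u.sum = w.sum → descentSet u ⊆ descentSet w → u ≠ w →
    List.Lex (· < ·) w u ∧ u.length < w.length := by
  induction w with
  | nil =>
    intro u hu _ hsum _ hne
    cases u with
    | nil => exact absurd rfl hne
    | cons x u' =>
      exfalso
      simp only [List.sum_cons, List.sum_nil] at hsum
      have := hu x (List.mem_cons_self ..)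
      omega
  | cons y w' ih =>
    intro u hu hw hsum hsub hne
    have hy := hw y (List.mem_cons_self ..)
    cases u with
    | nil =>
      exfalso
      simp only [List.sum_nil, List.sum_cons] at hsum
      omega
    | cons x u' =>
      have hx := hu x (List.mem_cons_self ..)
      by_cases hw' : w' = []
      · subst hw'
        cases u' with
        | nil =>
          exfalso
          apply hne
          simp only [List.sum_cons, List.sum_nil] at hsum
          have : x = y := by omega
          rw [this]
        | cons z u'' =>
          exfalso
          have hmem : x ∈ descentSet (x :: z :: u'') := by
            rw [descentSet_cons x _ (List.cons_ne_nil _ _)]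
            exact Finset.mem_insert_self _ _
          have := hsub hmem
          rw [descentSet_single] at this
          exact absurd this (Finset.notMem_empty _)
      · cases u' with
        | nil =>
          have hwsum : 0 < w'.sum := pos_sum_of_ne_nil hw'
            (fun t ht => hw t (List.mem_cons_of_mem _ ht))
          have hyx : y < x := by
            simp only [List.sum_cons, List.sum_nil] at hsum
            omega
          exact ⟨List.Lex.rel hyx, by
            simp only [List.length_cons, List.length_nil]
            have := List.length_pos_iff.mpr hw'
            omega⟩
        | cons z u'' =>
          have hu'' : (z :: u'') ≠ [] := List.cons_ne_nil _ _
          have hupos : ∀ t ∈ (z :: u''), 0 < t := fun t ht => hu t (List.mem_cons_of_mem _ ht)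
          have hwpos : ∀ t ∈ w', 0 < t := fun t ht => hw t (List.mem_cons_of_mem _ ht)
          have hxD : x ∈ descentSet (y :: w') := hsub (by
            rw [descentSet_cons x _ hu'']
            exact Finset.mem_insert_self _ _)
          rw [descentSet_cons y w' hw'] at hxD
          rcases Finset.mem_insert.mp hxD with hxy | himg
          · subst hxy
            have hsub' : descentSet (z :: u'') ⊆ descentSet w' := by
              intro t ht
              have htpos := (descentSet_mem_bounds hupos ht).1
              have hmem : x + t ∈ descentSet (x :: w') := hsub (by
                rw [descentSet_cons x _ hu'']
                exact Finset.mem_insert_of_mem (Finset.mem_image_of_mem _ ht))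
              rw [descentSet_cons x w' hw'] at hmem
              rcases Finset.mem_insert.mp hmem with h | h
              · omega
              · obtain ⟨s, hs, hst⟩ := Finset.mem_image.mp h
                have : t = s := by omega
                rwa [this]
            have hneq' : (z :: u'') ≠ w' := fun h => hne (by rw [h])
            have hsum' : (z :: u'').sum = w'.sum := by
              simp only [List.sum_cons] at hsum ⊢
              omega
            obtain ⟨hlex', hlen'⟩ := ih (z :: u'') hupos hwpos hsum' hsub' hneq'
            exact ⟨List.Lex.cons hlex', by simpa using Nat.succ_lt_succ hlen'⟩
          · obtain ⟨s, hs, hst⟩ := Finset.mem_image.mp himg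
            have hspos := (descentSet_mem_bounds hwpos hs).1
            have hyx : y < x := by omega
            refine ⟨List.Lex.rel hyx, ?_⟩
            have hproper : descentSet (x :: z :: u'') ⊂ descentSet (y :: w') := by
              rw [Finset.ssubset_iff_of_subset hsub]
              refine ⟨y, ?_, ?_⟩
              · rw [descentSet_cons y w' hw']
                exact Finset.mem_insert_self _ _
              · intro hyu
                rw [descentSet_cons x _ hu''] at hyu
                rcases Finset.mem_insert.mp hyu with h | h
                · omega
                · obtain ⟨t, ht, htx⟩ := Finset.mem_image.mp h
                  have := (descentSet_mem_bounds hupos ht).1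
                  omega
            have hcard := Finset.card_lt_card hproper
            rw [card_descentSet hu, card_descentSet hw] at hcard
            simp only [List.length_cons] at hcard ⊢
            omega

lemma monotone_lt_iff {N m : ℕ} {f : Fin N → Fin m} (hf : ∀ p q : Fin N, p ≤ q → f p ≤ f q)
    (p : Fin N) (v : ℕ) :
    (f p : ℕ) < v ↔ (p : ℕ) < (Finset.univ.filter fun q => (f q : ℕ) < v).card := by
  constructor
  · intro h
    have hsub : Finset.Iic p ⊆ Finset.univ.filter fun q => (f q : ℕ) < v := by
      intro q hq
      rw [Finset.mem_filter]
      exact ⟨Finset.mem_univ _, lt_of_le_of_lt (hf q p (Finset.mem_Iic.mp hq)) h⟩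
    have := Finset.card_le_card hsub
    rw [Fin.card_Iic] at this
    omega
  · intro h
    by_contra hx
    push_neg at hx
    have hsub : (Finset.univ.filter fun q => (f q : ℕ) < v) ⊆ Finset.Iio p := by
      intro q hq
      rw [Finset.mem_filter] at hq
      rw [Finset.mem_Iio]
      by_contra hqp
      push_neg at hqp
      have := hf p q hqp
      omega
    have := Finset.card_le_card hsub
    rw [Fin.card_Iio] at this
    omega

lemma cnt_eq_sum {N m : ℕ} (f : Fin N → Fin m) (v : ℕ) :
    (Finset.univ.filter fun q => (f q : ℕ) < v).card
      = ∑ w ∈ Finset.univ.filter (fun w : Fin m => (w : ℕ) < v),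
          (Finset.univ.filter fun q => f q = w).card := by
  rw [Finset.card_eq_sum_card_fiberwise
    (f := f) (t := Finset.univ.filter (fun w : Fin m => (w : ℕ) < v))
    (fun q hq => by simpa using hq)]
  apply Finset.sum_congr rfl
  intro w hw
  rw [Finset.mem_filter] at hw
  congr 1
  ext q
  simp only [Finset.mem_filter, Finset.mem_univ, true_and]
  constructor
  · rintro ⟨_, h⟩; exact h
  · rintro rfl; exact ⟨hw.2, rfl⟩

lemma monotone_ext {N m : ℕ} {f g : Fin N → Fin m}
    (hf : ∀ p q : Fin N, p ≤ q → f p ≤ f q) (hg : ∀ p q : Fin N, p ≤ q → g p ≤ g q)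
    (hcnt : ∀ w : Fin m, (Finset.univ.filter fun q => f q = w).card
      = (Finset.univ.filter fun q => g q = w).card) : f = g := by
  have hc : ∀ v : ℕ, (Finset.univ.filter fun q => (f q : ℕ) < v).card
      = (Finset.univ.filter fun q => (g q : ℕ) < v).card := by
    intro v
    rw [cnt_eq_sum, cnt_eq_sum]
    exact Finset.sum_congr rfl fun w _ => hcnt w
  funext p
  have hiff : ∀ v : ℕ, (f p : ℕ) < v ↔ (g p : ℕ) < v := by
    intro v
    rw [monotone_lt_iff hf, monotone_lt_iff hg, hc]
  have h1 := (hiff ((f p : ℕ) + 1)).mp (Nat.lt_succ_self _)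
  have h2 := (hiff ((g p : ℕ) + 1)).mpr (Nat.lt_succ_self _)
  exact Fin.ext (by omega)

lemma index_monotone {N : ℕ} (α : Composition N) (p q : Fin N) (h : p ≤ q) :
    α.index p ≤ α.index q := by
  by_contra hx
  push_neg at hx
  have h1 := α.lt_sizeUpTo_index_succ q
  have h2 : α.sizeUpTo ((α.index q : ℕ) + 1) ≤ α.sizeUpTo (α.index p : ℕ) :=
    α.monotone_sizeUpTo (by exact hx)
  have h3 := α.sizeUpTo_index_le p
  rw [Fin.val_succ] at h1
  have : (p : ℕ) ≤ (q : ℕ) := h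
  omega

lemma card_index_fiber {N : ℕ} (α : Composition N) (v : ℕ) :
    (Finset.univ.filter fun p : Fin N => (α.index p : ℕ) = v).card = α.blocks.getD v 0 := by
  by_cases hv : v < α.length
  · have hiff : ∀ p : Fin N, (α.index p : ℕ) = v ↔
        α.sizeUpTo v ≤ (p : ℕ) ∧ (p : ℕ) < α.sizeUpTo (v + 1) := by
      intro p
      constructor
      · rintro h
        have h1 := α.sizeUpTo_index_le p
        have h2 := α.lt_sizeUpTo_index_succ p
        rw [Fin.val_succ, h] at h2
        rw [h] at h1
        exact ⟨h1, h2⟩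
      · rintro ⟨h1, h2⟩
        by_contra hne
        rcases Nat.lt_or_ge (α.index p : ℕ) v with h | h
        · have := α.lt_sizeUpTo_index_succ p
          rw [Fin.val_succ] at this
          have hmono : α.sizeUpTo ((α.index p : ℕ) + 1) ≤ α.sizeUpTo v :=
            α.monotone_sizeUpTo h
          omega
        · have h' : v + 1 ≤ (α.index p : ℕ) := by omega
          have hmono : α.sizeUpTo (v + 1) ≤ α.sizeUpTo (α.index p : ℕ) :=
            α.monotone_sizeUpTo h'
          have := α.sizeUpTo_index_le p
          omega
    rw [Finset.filter_congr (fun p _ => by rw [hiff p])]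
    have hcard : (Finset.univ.filter fun p : Fin N =>
        α.sizeUpTo v ≤ (p : ℕ) ∧ (p : ℕ) < α.sizeUpTo (v + 1)).card
        = (Finset.Ico (α.sizeUpTo v) (α.sizeUpTo (v + 1))).card := by
      refine Finset.card_bij (fun p _ => (p : ℕ)) ?_ ?_ ?_
      · intro p hp
        rw [Finset.mem_filter] at hp
        exact Finset.mem_Ico.mpr hp.2
      · intro p _ q _ h
        exact Fin.ext h
      · intro x hx
        rw [Finset.mem_Ico] at hx
        have hxN : x < N := lt_of_lt_of_le hx.2 (α.sizeUpTo_le _)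
        exact ⟨⟨x, hxN⟩, Finset.mem_filter.mpr ⟨Finset.mem_univ _, hx⟩, rfl⟩
    rw [hcard, Nat.card_Ico, α.sizeUpTo_succ hv,
      List.getD_eq_getElem _ _ (by rw [α.blocks_length]; exact hv)]
    have hbf : α.blocksFun ⟨v, hv⟩ = α.blocks[v] := by
      simp [Composition.blocksFun]
    omega
  · rw [Finset.filter_false_of_mem, Finset.card_empty]
    · rw [List.getD_eq_default]
      rw [α.blocks_length]
      omega
    · intro p _
      have := (α.index p).isLt
      omega

lemma index_lt_index_iff {N : ℕ} (α : Composition N) {p q : Fin N} (hpq : (p : ℕ) + 1 = (q : ℕ)) :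
    α.index p < α.index q ↔ ((p : ℕ) + 1) ∈ descentSet α.blocks := by
  constructor
  · intro h
    have h1 := α.lt_sizeUpTo_index_succ p
    rw [Fin.val_succ] at h1
    have h2 : α.sizeUpTo ((α.index p : ℕ) + 1) ≤ α.sizeUpTo (α.index q : ℕ) :=
      α.monotone_sizeUpTo (by exact h)
    have h3 := α.sizeUpTo_index_le q
    have heq : α.sizeUpTo (α.index q : ℕ) = (p : ℕ) + 1 := by omega
    have hpos : 0 < (α.index q : ℕ) := lt_of_le_of_lt (Nat.zero_le _) h
    have hlt := (α.index q).isLt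
    refine mem_descentSet.mpr ⟨(α.index q : ℕ) - 1, ?_, ?_⟩
    · rw [α.blocks_length]
      omega
    · have hk1 : (α.index q : ℕ) - 1 + 1 = (α.index q : ℕ) := by omega
      rw [hk1]
      exact heq
  · intro h
    obtain ⟨k, hk, hks⟩ := mem_descentSet.mp h
    rw [α.blocks_length] at hk
    have hkl : k + 1 < α.length := by omega
    have hsz : α.sizeUpTo (k + 1) = (p : ℕ) + 1 := hks
    have hq : k + 1 ≤ (α.index q : ℕ) := by
      by_contra hx
      push_neg at hx
      have h1 := α.lt_sizeUpTo_index_succ q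
      rw [Fin.val_succ] at h1
      have h2 : α.sizeUpTo ((α.index q : ℕ) + 1) ≤ α.sizeUpTo (k + 1) :=
        α.monotone_sizeUpTo hx
      omega
    have hp : (α.index p : ℕ) < k + 1 := by
      by_contra hx
      push_neg at hx
      have h2 : α.sizeUpTo (k + 1) ≤ α.sizeUpTo (α.index p : ℕ) :=
        α.monotone_sizeUpTo hx
      have := α.sizeUpTo_index_le p
      omega
    rw [Fin.lt_def]
    omega

noncomputable def eOf (m : ℕ) (α : List ℕ) : Fin m →₀ ℕ :=
  Finsupp.equivFunOnFinite.symm (fun v => α.getD v 0)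

lemma eOf_apply {m : ℕ} (α : List ℕ) (v : Fin m) : eOf m α v = α.getD (v : ℕ) 0 := by
  simp [eOf]

open MvPolynomial

lemma prod_X_pow_univ {m : ℕ} (s : Fin m →₀ ℕ) :
    (∏ v : Fin m, (X v : MvPolynomial (Fin m) ℚ) ^ s v) = monomial s 1 := by
  rw [← MvPolynomial.prod_X_pow_eq_monomial]
  exact (Finset.prod_subset (Finset.subset_univ _) (fun x _ hx => by
    rw [Finsupp.notMem_support_iff.mp hx, pow_zero])).symm

noncomputable def cntF {N m : ℕ} (f : Fin N → Fin m) : Fin m →₀ ℕ :=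
  Finsupp.equivFunOnFinite.symm (fun v => (Finset.univ.filter fun p => f p = v).card)

lemma cntF_apply {N m : ℕ} (f : Fin N → Fin m) (v : Fin m) :
    cntF f v = (Finset.univ.filter fun p => f p = v).card := by
  simp [cntF]

lemma prod_X_eq_monomial {N m : ℕ} (f : Fin N → Fin m) :
    (∏ p : Fin N, (X (f p) : MvPolynomial (Fin m) ℚ)) = monomial (cntF f) 1 := by
  rw [← prod_X_pow_univ]
  rw [← Finset.prod_fiberwise_of_maps_to (fun p _ => Finset.mem_univ (f p))
    (fun p => (X (f p) : MvPolynomial (Fin m) ℚ))]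
  apply Finset.prod_congr rfl
  intro v _
  rw [Finset.prod_congr rfl (fun p hp => by rw [(Finset.mem_filter.mp hp).2]),
    Finset.prod_const, cntF_apply]

lemma coeff_Fqs {n m : ℕ} (a : List ℕ) (ha : ∀ x ∈ a, 0 < x) (hsum : a.sum = n)
    (α : Composition n) (hm : n ≤ m) :
    MvPolynomial.coeff (eOf m α.blocks) (Fqs m a)
      = if descentSet a ⊆ descentSet α.blocks then 1 else 0 := by
  subst hsum
  have hml : α.length ≤ m := le_trans α.length_le hm
  set e : Fin m →₀ ℕ := eOf m α.blocks with he
  set fα : Fin a.sum → Fin m := fun p => Fin.castLE hml (α.index p) with hfα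
  have hfαmono : ∀ p q : Fin a.sum, p ≤ q → fα p ≤ fα q := by
    intro p q h
    exact index_monotone α p q h
  have hfib : ∀ f : Fin a.sum → Fin m, cntF f = e ↔
      ∀ v : Fin m, (Finset.univ.filter fun p => f p = v).card = α.blocks.getD (v : ℕ) 0 := by
    intro f
    constructor
    · intro h v
      rw [← cntF_apply, h, he, eOf_apply]
    · intro h
      ext v
      rw [cntF_apply, he, eOf_apply]
      exact h v
  have hfαfib : ∀ v : Fin m,
      (Finset.univ.filter fun p => fα p = v).card = α.blocks.getD (v : ℕ) 0 := by
    intro v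
    rw [← card_index_fiber α (v : ℕ)]
    congr 1
    apply Finset.filter_congr
    intro p _
    rw [hfα]
    constructor
    · intro h
      rw [← h]
      rfl
    · intro h
      exact Fin.ext h
  have hfαcnt : cntF fα = e := (hfib fα).mpr hfαfib
  have huniq : ∀ f : Fin a.sum → Fin m, (∀ p q : Fin a.sum, p ≤ q → f p ≤ f q) →
      cntF f = e → f = fα := by
    intro f hmono hcnt
    apply monotone_ext hmono hfαmono
    intro w
    rw [(hfib f).mp hcnt w, hfαfib w]
  have hstrict : ∀ p q : Fin a.sum, (p : ℕ) + 1 = (q : ℕ) →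
      (fα p < fα q ↔ ((p : ℕ) + 1) ∈ descentSet α.blocks) := by
    intro p q hpq
    rw [← index_lt_index_iff α hpq]
    constructor
    · intro h
      exact h
    · intro h
      exact h
  rw [Fqs, MvPolynomial.coeff_sum]
  rw [Finset.sum_congr rfl (fun f _ => by
    rw [prod_X_eq_monomial, MvPolynomial.coeff_monomial])]
  rw [Finset.sum_boole]
  by_cases hD : descentSet a ⊆ descentSet α.blocks
  · rw [if_pos hD]
    have hset : (Finset.univ.filter (fun f : Fin a.sum → Fin m =>
        (∀ p q : Fin a.sum, p ≤ q → f p ≤ f q) ∧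
        (∀ p q : Fin a.sum, (p : ℕ) + 1 = (q : ℕ) → ((p : ℕ) + 1) ∈ descentSet a →
          f p < f q))).filter (fun f => cntF f = e) = {fα} := by
      ext f
      rw [Finset.mem_filter, Finset.mem_filter, Finset.mem_singleton]
      constructor
      · rintro ⟨⟨_, hmono, _⟩, hcnt⟩
        exact huniq f hmono hcnt
      · rintro rfl
        refine ⟨⟨Finset.mem_univ _, hfαmono, ?_⟩, hfαcnt⟩
        intro p q hpq hmem
        exact (hstrict p q hpq).mpr (hD hmem)
    rw [hset, Finset.card_singleton, Nat.cast_one]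
  · rw [if_neg hD]
    have hset : (Finset.univ.filter (fun f : Fin a.sum → Fin m =>
        (∀ p q : Fin a.sum, p ≤ q → f p ≤ f q) ∧
        (∀ p q : Fin a.sum, (p : ℕ) + 1 = (q : ℕ) → ((p : ℕ) + 1) ∈ descentSet a →
          f p < f q))).filter (fun f => cntF f = e) = ∅ := by
      rw [Finset.eq_empty_iff_forall_notMem]
      intro f hf
      rw [Finset.mem_filter, Finset.mem_filter] at hf
      obtain ⟨⟨_, hmono, hdesc⟩, hcnt⟩ := hf
      have hfeq : f = fα := huniq f hmono hcnt
      apply hD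
      intro s hs
      obtain ⟨hs0, hsN⟩ := descentSet_mem_bounds ha hs
      set p : Fin a.sum := ⟨s - 1, by omega⟩ with hp
      set q : Fin a.sum := ⟨s, hsN⟩ with hq
      have hpq : (p : ℕ) + 1 = (q : ℕ) := by
        rw [hp, hq]
        simp
        omega
      have hlt : fα p < fα q := by
        rw [← hfeq]
        apply hdesc p q hpq
        have : (p : ℕ) + 1 = s := by rw [hp]; simp; omega
        rwa [this]
      have := (hstrict p q hpq).mp hlt
      have hps : (p : ℕ) + 1 = s := by rw [hp]; simp; omega
      rwa [hps] at this
    rw [hset, Finset.card_empty, Nat.cast_zero]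

lemma getD_le_sum (l : List ℕ) (v : ℕ) : l.getD v 0 ≤ l.sum := by
  by_cases h : v < l.length
  · rw [List.getD_eq_getElem _ _ h]
    exact List.single_le_sum (fun x _ => Nat.zero_le x) _ (List.getElem_mem _)
  · rw [List.getD_eq_default _ _ (le_of_not_gt h)]
    exact Nat.zero_le _

lemma coeff_schurPoly {m : ℕ} (l α : List ℕ) (hsum : α.sum = l.sum) :
    MvPolynomial.coeff (eOf m α) (schurPoly m l)
      = (ssytCount m l (fun v => α.getD (v : ℕ) 0) : ℚ) := by
  rw [schurPoly, MvPolynomial.coeff_sum]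
  have hle : ∀ v : Fin m, α.getD (v : ℕ) 0 < l.sum + 1 := by
    intro v
    have h1 := getD_le_sum α (v : ℕ)
    omega
  set d0 : Fin m → Fin (l.sum + 1) := fun v => ⟨α.getD (v : ℕ) 0, hle v⟩ with hd0
  have hee : ∀ g : Fin m → ℕ,
      Finsupp.equivFunOnFinite.symm g = eOf m α ↔ g = fun v : Fin m => α.getD (v : ℕ) 0 := by
    intro g
    rw [eOf]
    exact Finsupp.equivFunOnFinite.symm.injective.eq_iff
  have hterm : ∀ d : Fin m → Fin (l.sum + 1),
      MvPolynomial.coeff (eOf m α)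
          ((ssytCount m l (fun v => (d v : ℕ)) : ℚ) • ∏ v : Fin m, X v ^ ((d v : ℕ)))
        = (ssytCount m l (fun v => (d v : ℕ)) : ℚ) *
            (if Finsupp.equivFunOnFinite.symm (fun v : Fin m => (d v : ℕ)) = eOf m α
              then 1 else 0) := by
    intro d
    rw [MvPolynomial.coeff_smul, smul_eq_mul]
    congr 1
    have : (∏ v : Fin m, (X v : MvPolynomial (Fin m) ℚ) ^ ((d v : ℕ)))
        = monomial (Finsupp.equivFunOnFinite.symm (fun v : Fin m => (d v : ℕ))) 1 := by
      rw [← prod_X_pow_univ]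
      apply Finset.prod_congr rfl
      intro v _
      congr 1
    rw [this, MvPolynomial.coeff_monomial]
  rw [Finset.sum_congr rfl (fun d _ => hterm d)]
  rw [Finset.sum_eq_single d0]
  · have hcond : Finsupp.equivFunOnFinite.symm (fun v : Fin m => (d0 v : ℕ)) = eOf m α := by
      rw [hee]
    rw [if_pos hcond, mul_one]
  · intro d _ hne
    have hcond : ¬ Finsupp.equivFunOnFinite.symm (fun v : Fin m => (d v : ℕ)) = eOf m α := by
      rw [hee]
      intro hfun
      exact hne (funext fun v => Fin.ext (congrFun hfun v))
    rw [if_neg hcond, mul_zero]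
  · intro h
    exact absurd (Finset.mem_univ d0) h

/-- Suppose Σ_{λ ⊢ n} b_λ s_λ(x₁,…,x_m) = Σ_{α ⊨ n} c_α F_α(x₁,…,x_m)
with rational coefficients, m ≥ n.  If ν is the lexicographically greatest composition of
n with c_ν ≠ 0, then ν is a partition and b_ν = c_ν. -/
theorem leading_coefficient_eq (n m : ℕ) (hn : 0 < n) (hm : n ≤ m)
    (b : PartitionList n → ℚ) (c : Composition n → ℚ)
    (heq : ∑ p : PartitionList n, b p • schurPoly m p.1.blocks
         = ∑ α : Composition n, c α • Fqs m α.blocks)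
    (ν : Composition n) (hν : c ν ≠ 0)
    (hmax : ∀ α : Composition n, c α ≠ 0 → α ≠ ν → List.Lex (· < ·) α.blocks ν.blocks) :
    ∃ hs : ν.blocks.Pairwise (· ≥ ·), b ⟨ν, hs⟩ = c ν := by
  classical
  have hlex_iff : ∀ u w : List ℕ, u < w ↔ List.Lex (· < ·) u w := fun u w => Iff.rfl
  -- coefficient equations
  have hcoeff : ∀ α : Composition n,
      (∑ p : PartitionList n,
        b p * (ssytCount m p.1.blocks (fun v => α.blocks.getD (v : ℕ) 0) : ℚ))
      = ∑ γ : Composition n,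
          c γ * (if descentSet γ.blocks ⊆ descentSet α.blocks then 1 else 0) := by
    intro α
    have h1 := congrArg (MvPolynomial.coeff (eOf m α.blocks)) heq
    rw [MvPolynomial.coeff_sum, MvPolynomial.coeff_sum] at h1
    have hLs : (∑ p : PartitionList n,
        MvPolynomial.coeff (eOf m α.blocks) (b p • schurPoly m p.1.blocks))
        = ∑ p : PartitionList n,
            b p * (ssytCount m p.1.blocks (fun v => α.blocks.getD (v : ℕ) 0) : ℚ) :=
      Finset.sum_congr rfl (fun p _ => by
        rw [MvPolynomial.coeff_smul, smul_eq_mul,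
          coeff_schurPoly _ _ (by rw [α.blocks_sum, p.1.blocks_sum])])
    have hRs : (∑ γ : Composition n,
        MvPolynomial.coeff (eOf m α.blocks) (c γ • Fqs m γ.blocks))
        = ∑ γ : Composition n,
            c γ * (if descentSet γ.blocks ⊆ descentSet α.blocks then 1 else 0) :=
      Finset.sum_congr rfl (fun γ _ => by
        rw [MvPolynomial.coeff_smul, smul_eq_mul,
          coeff_Fqs γ.blocks (fun x hx => γ.blocks_pos hx) γ.blocks_sum α hm])
    rw [hLs, hRs] at h1
    exact h1
  have hblen : ∀ γ : Composition n, γ.blocks.length ≤ m :=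
    fun γ => le_trans (by rw [γ.blocks_length]; exact γ.length_le) hm
  have hK0 : ∀ (p : PartitionList n) (α : Composition n),
      List.Lex (· < ·) p.1.blocks α.blocks →
      (ssytCount m p.1.blocks (fun v => α.blocks.getD (v : ℕ) 0) : ℚ) = 0 := by
    intro p α hlex
    rw [ssytCount_eq_zero p.2 (fun x hx => α.blocks_pos hx) (hblen α) hlex, Nat.cast_zero]
  have hK1 : ∀ p : PartitionList n,
      (ssytCount m p.1.blocks (fun v => p.1.blocks.getD (v : ℕ) 0) : ℚ) = 1 := by
    intro p
    rw [ssytCount_self p.2 (hblen p.1), Nat.cast_one]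
  -- the vanishing machine
  have vanish : ∀ Q : Composition n → Prop,
      (∀ γ : Composition n, Q γ →
        (∑ p : PartitionList n,
          b p * (ssytCount m p.1.blocks (fun v => γ.blocks.getD (v : ℕ) 0) : ℚ)) = 0) →
      (∀ γ γ' : Composition n, Q γ → descentSet γ'.blocks ⊆ descentSet γ.blocks →
        γ' ≠ γ → Q γ') →
      ∀ γ : Composition n, Q γ → c γ = 0 := by
    intro Q hQ0 hQup
    have main : ∀ k, ∀ γ : Composition n, γ.blocks.length ≤ k → Q γ → c γ = 0 := by
      intro k
      induction k with
      | zero =>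
        intro γ hlen _
        exfalso
        have hnil : γ.blocks = [] := List.length_eq_zero_iff.mp (Nat.le_zero.mp hlen)
        have := γ.blocks_sum
        rw [hnil] at this
        simp at this
        omega
      | succ k ih =>
        intro γ hlen hQ
        have h := hcoeff γ
        rw [hQ0 γ hQ] at h
        rw [← Finset.add_sum_erase _ _ (Finset.mem_univ γ)] at h
        rw [if_pos (subset_refl _), mul_one] at h
        have hrest : ∑ γ' ∈ Finset.univ.erase γ,
            c γ' * (if descentSet γ'.blocks ⊆ descentSet γ.blocks then 1 else 0) = 0 := by
          apply Finset.sum_eq_zero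
          intro γ' hγ'
          have hne : γ' ≠ γ := (Finset.mem_erase.mp hγ').1
          by_cases hsub : descentSet γ'.blocks ⊆ descentSet γ.blocks
          · have hfact := descent_subset_lex γ.blocks γ'.blocks
              (fun x hx => γ'.blocks_pos hx) (fun x hx => γ.blocks_pos hx)
              (by rw [γ.blocks_sum, γ'.blocks_sum]) hsub
              (fun hbl => hne (by ext1; exact hbl))
            have hQ' : Q γ' := hQup γ γ' hQ hsub hne
            rw [ih γ' (by omega) hQ', zero_mul]
          · rw [if_neg hsub, mul_zero]
        rw [hrest, add_zero] at h
        exact h.symm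
    exact fun γ hQ => main γ.blocks.length γ le_rfl hQ
  by_cases hb : ∀ p : PartitionList n, b p = 0
  · exfalso
    apply hν
    apply vanish (fun _ => True) _ (fun _ _ _ _ _ => trivial) ν trivial
    intro γ _
    exact Finset.sum_eq_zero fun p _ => by rw [hb p, zero_mul]
  · push_neg at hb
    obtain ⟨q, hq⟩ := hb
    obtain ⟨pstar, hpstar_mem, hpstar_max⟩ :=
      Finset.exists_max_image (Finset.univ.filter fun p : PartitionList n => b p ≠ 0)
        (fun p => p.1.blocks)
        ⟨q, Finset.mem_filter.mpr ⟨Finset.mem_univ _, hq⟩⟩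
    have hbstar : b pstar ≠ 0 := (Finset.mem_filter.mp hpstar_mem).2
    -- all summands of the Schur side vanish above pstar
    have hQ0 : ∀ γ : Composition n, List.Lex (· < ·) pstar.1.blocks γ.blocks →
        (∑ p : PartitionList n,
          b p * (ssytCount m p.1.blocks (fun v => γ.blocks.getD (v : ℕ) 0) : ℚ)) = 0 := by
      intro γ hlex
      apply Finset.sum_eq_zero
      intro p _
      by_cases hbp : b p = 0
      · rw [hbp, zero_mul]
      · have hle : p.1.blocks ≤ pstar.1.blocks :=
          hpstar_max p (Finset.mem_filter.mpr ⟨Finset.mem_univ _, hbp⟩)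
        have hlt : List.Lex (· < ·) p.1.blocks γ.blocks := by
          rw [← hlex_iff] at hlex ⊢
          exact lt_of_le_of_lt hle hlex
        rw [hK0 p γ hlt, mul_zero]
    have hQup : ∀ γ γ' : Composition n, List.Lex (· < ·) pstar.1.blocks γ.blocks →
        descentSet γ'.blocks ⊆ descentSet γ.blocks → γ' ≠ γ →
        List.Lex (· < ·) pstar.1.blocks γ'.blocks := by
      intro γ γ' hQ hsub hne
      have hfact := descent_subset_lex γ.blocks γ'.blocks
        (fun x hx => γ'.blocks_pos hx) (fun x hx => γ.blocks_pos hx)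
        (by rw [γ.blocks_sum, γ'.blocks_sum]) hsub
        (fun hbl => hne (by ext1; exact hbl))
      rw [← hlex_iff] at hQ hfact ⊢
      exact lt_trans hQ hfact.1
    have hvan := vanish (fun γ => List.Lex (· < ·) pstar.1.blocks γ.blocks) hQ0 hQup
    -- compute c (pstar.1) = b pstar
    have hEμ := hcoeff pstar.1
    have hLHS : (∑ p : PartitionList n,
        b p * (ssytCount m p.1.blocks (fun v => pstar.1.blocks.getD (v : ℕ) 0) : ℚ))
        = b pstar := by
      rw [Finset.sum_eq_single pstar]
      · rw [hK1 pstar, mul_one]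
      · intro p _ hne
        by_cases hbp : b p = 0
        · rw [hbp, zero_mul]
        · have hle : p.1.blocks ≤ pstar.1.blocks :=
            hpstar_max p (Finset.mem_filter.mpr ⟨Finset.mem_univ _, hbp⟩)
          have hlt : List.Lex (· < ·) p.1.blocks pstar.1.blocks := by
            rw [← hlex_iff]
            rcases lt_or_eq_of_le hle with h | h
            · exact h
            · exact absurd (Subtype.ext (by ext1; exact h)) hne
          rw [hK0 p pstar.1 hlt, mul_zero]
      · intro h
        exact absurd (Finset.mem_univ pstar) h
    have hRHS : (∑ γ : Composition n,
        c γ * (if descentSet γ.blocks ⊆ descentSet pstar.1.blocks then 1 else 0))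
        = c pstar.1 := by
      rw [← Finset.add_sum_erase _ _ (Finset.mem_univ pstar.1),
        if_pos (subset_refl _), mul_one]
      have hrest : ∑ γ' ∈ Finset.univ.erase pstar.1,
          c γ' * (if descentSet γ'.blocks ⊆ descentSet pstar.1.blocks then 1 else 0)
          = 0 := by
        apply Finset.sum_eq_zero
        intro γ' hγ'
        have hne : γ' ≠ pstar.1 := (Finset.mem_erase.mp hγ').1
        by_cases hsub : descentSet γ'.blocks ⊆ descentSet pstar.1.blocks
        · have hfact := descent_subset_lex pstar.1.blocks γ'.blocks
            (fun x hx => γ'.blocks_pos hx) (fun x hx => pstar.1.blocks_pos hx)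
            (by rw [pstar.1.blocks_sum, γ'.blocks_sum]) hsub
            (fun hbl => hne (by ext1; exact hbl))
          rw [hvan γ' hfact.1, zero_mul]
        · rw [if_neg hsub, mul_zero]
      rw [hrest, add_zero]
    have hcb : c pstar.1 = b pstar := by rw [← hLHS, hEμ, hRHS]
    have hcμ : c pstar.1 ≠ 0 := by rw [hcb]; exact hbstar
    have hμν : pstar.1 = ν := by
      by_contra hne
      exact hν (hvan ν (hmax pstar.1 hcμ hne))
    refine ⟨hμν ▸ pstar.2, ?_⟩
    have hsub : (⟨ν, hμν ▸ pstar.2⟩ : PartitionList n) = pstar := Subtype.ext hμν.symm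
    rw [hsub, ← hcb, hμν]
end

section
/- For every h ≥ 1 there exists a symmetric chain decomposition 𝒞 of L(3,h) such that: (a) a partition is the minimal element of a chain of 𝒞 if and only if it lies in L(3,h) and has the form 3^{m3} 1^{m1} with m1 ≥ 3·m3 and m1 ≠ 3·m3 + 1 (equivalently, the form 3^{m3} 1^{m1′ + 3m3} with m1′ ≥ 0 and m1′ ≠ 1); (b) if the minimal element of a chain C ∈ 𝒞 is 3^{m3} 1^{m1 + 3m3} with m1 ≠ 1, then the maximal element of C is 3^{h − m1 − 3m3} 2^{m1} 1^{3m3} when m1 is even, and 3^{h − m1 − 3m3 + 1} 2^{m1 − 2} 1^{3m3 + 1} when m1 is odd; (c) a partition is the maximal element of a chain of 𝒞 if and only if its complement in the 3×h box has the form 2^{m2} 1^{m1} with 3·m1 + 4·m2 ≤ 3h, and (m1 even ⟺ m2 ≡ 0 mod 3) and (m1 odd ⟺ m2 ≡ 1 mod 3). -/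
/-- `b` covers `a` in Young's lattice: `a ⊆ b` (componentwise, viewing partitions as
lists of parts padded by zeros) and `b` has exactly one more box than `a`. -/
def CoversBox (a b : List ℕ) : Prop :=
  (∀ i, a.getD i 0 ≤ b.getD i 0) ∧ b.sum = a.sum + 1

/-- The partitions lying in a `w × h` box: largest part at most `w`, at most `h`
parts. -/
def boxSet (w h : ℕ) : Set (List ℕ) :=
  {l | l.Pairwise (· ≥ ·) ∧ (∀ x ∈ l, 0 < x ∧ x ≤ w) ∧ l.length ≤ h}

/-- `C` is a symmetric chain decomposition of the subset `S` of the partitions in a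
`w × h` box: the members of `C` are nonempty saturated chains (recorded as lists,
increasing, consecutive elements differing by adding a single box) of elements of `S`,
the ranks of the minimal and maximal element of each chain sum to `w*h`, and every
element of `S` lies in exactly one chain of `C`. -/
structure IsSCDOn (w h : ℕ) (S : Set (List ℕ)) (C : Set (List (List ℕ))) : Prop where
  nonempty : ∀ c ∈ C, c ≠ []
  subset : ∀ c ∈ C, ∀ l ∈ c, l ∈ S
  saturated : ∀ c ∈ C, c.Chain' CoversBox
  symm : ∀ c ∈ C, c.headI.sum + (c.getLastD []).sum = w * h
  partitioned : ∀ l ∈ S, ∃! c, c ∈ C ∧ l ∈ c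

/-- A symmetric chain decomposition of `L(w,h)`, the poset of all partitions in a
`w × h` box. -/
def IsSCD (w h : ℕ) (C : Set (List (List ℕ))) : Prop :=
  IsSCDOn w h (boxSet w h) C

/-- The complement of `l` in the `w × h` box: the partition
`(w − λ_h, w − λ_{h−1}, …, w − λ_1)`, `l` being padded with zeros to `h` parts. -/
def complementBox (w h : ℕ) (l : List ℕ) : List ℕ :=
  (List.range h).map fun i => w - l.getD (h - 1 - i) 0


def rowP (a b c : ℕ) : List ℕ :=
  List.replicate a 3 ++ List.replicate b 2 ++ List.replicate c 1

lemma getD_replicate' (n x d i : ℕ) (h : i < n) : (List.replicate n x).getD i d = x := by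
  simp [List.getD_eq_getElem?_getD, List.getElem?_replicate, h]

lemma rowP_getD (a b c i : ℕ) :
    (rowP a b c).getD i 0 =
      if i < a then 3 else if i < a + b then 2 else if i < a + b + c then 1 else 0 := by
  unfold rowP
  rcases lt_or_ge i (a+b) with hi2 | hi2
  · rw [List.getD_append _ _ _ _ (by simp; omega)]
    rcases lt_or_ge i a with hi | hi
    · rw [List.getD_append _ _ _ _ (by simpa using hi), getD_replicate' _ _ _ _ hi]
      simp [hi]
    · rw [List.getD_append_right _ _ _ _ (by simpa using hi), List.length_replicate,
        getD_replicate' _ _ _ _ (by omega)]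
      split_ifs <;> omega
  · rw [List.getD_append_right _ _ _ _ (by simp; omega)]
    simp only [List.length_append, List.length_replicate]
    rcases lt_or_ge i (a+b+c) with hi3 | hi3
    · rw [getD_replicate' _ _ _ _ (by omega)]; split_ifs <;> omega
    · rw [List.getD_eq_default _ _ (by simp; omega)]; split_ifs <;> omega


lemma rowP_sum (a b c : ℕ) : (rowP a b c).sum = 3*a + 2*b + c := by
  simp [rowP, List.sum_replicate, mul_comm]; ring

lemma rowP_length (a b c : ℕ) : (rowP a b c).length = a + b + c := by
  simp [rowP]; omega

lemma rowP_count3 (a b c : ℕ) : (rowP a b c).count 3 = a := by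
  simp [rowP, List.count_append, List.count_replicate]

lemma rowP_count2 (a b c : ℕ) : (rowP a b c).count 2 = b := by
  simp [rowP, List.count_append, List.count_replicate]

lemma rowP_count1 (a b c : ℕ) : (rowP a b c).count 1 = c := by
  simp [rowP, List.count_append, List.count_replicate]

lemma rowP_inj {a b c a' b' c' : ℕ} (h : rowP a b c = rowP a' b' c') :
    a = a' ∧ b = b' ∧ c = c' := by
  refine ⟨?_, ?_, ?_⟩
  · have := congrArg (List.count 3) h; simpa [rowP_count3] using this
  · have := congrArg (List.count 2) h; simpa [rowP_count2] using this
  · have := congrArg (List.count 1) h; simpa [rowP_count1] using this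

lemma rowP_mem_box {a b c h : ℕ} (hs : a + b + c ≤ h) : rowP a b c ∈ boxSet 3 h := by
  refine ⟨?_, ?_, ?_⟩
  · unfold rowP
    rw [List.pairwise_append, List.pairwise_append]
    refine ⟨⟨List.pairwise_replicate.2 (by simp), List.pairwise_replicate.2 (by simp), ?_⟩,
      List.pairwise_replicate.2 (by simp), ?_⟩
    · intro x hx y hy
      simp only [List.eq_of_mem_replicate hx, List.eq_of_mem_replicate hy]; omega
    · intro x hx y hy
      rw [List.eq_of_mem_replicate hy]
      rcases List.mem_append.1 hx with hx | hx <;>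
        simp [List.eq_of_mem_replicate hx]
  · intro x hx
    simp only [rowP, List.mem_append, List.mem_replicate] at hx
    rcases hx with (⟨_, rfl⟩ | ⟨_, rfl⟩) | ⟨_, rfl⟩ <;> omega
  · rw [rowP_length]; exact hs

lemma covers_rowP {a b c a' b' c' : ℕ} (h1 : a ≤ a') (h2 : a + b ≤ a' + b')
    (h3 : a + b + c ≤ a' + b' + c') (h4 : 3*a' + 2*b' + c' = 3*a + 2*b + c + 1) :
    CoversBox (rowP a b c) (rowP a' b' c') := by
  constructor
  · intro i
    rw [rowP_getD, rowP_getD]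
    split_ifs <;> omega
  · rw [rowP_sum, rowP_sum]; omega

lemma rowP_canonical {h : ℕ} {l : List ℕ} (hl : l ∈ boxSet 3 h) :
    ∃ a b c, l = rowP a b c ∧ a + b + c ≤ h := by
  obtain ⟨hsort, hmem, hlen⟩ := hl
  suffices H : ∃ a b c, l = rowP a b c by
    obtain ⟨a, b, c, rfl⟩ := H
    exact ⟨a, b, c, rfl, by rwa [rowP_length] at hlen⟩
  clear hlen
  induction l with
  | nil => exact ⟨0, 0, 0, rfl⟩
  | cons x xs ih =>
    rw [List.pairwise_cons] at hsort
    obtain ⟨hx, hsort⟩ := hsort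
    obtain ⟨a, b, c, rfl⟩ := ih hsort (fun y hy => hmem y (List.mem_cons_of_mem _ hy))
    obtain ⟨hx0, hx3⟩ := hmem x List.mem_cons_self
    interval_cases x
    · -- x = 1 : need a = 0 and b = 0
      have ha : a = 0 := by
        by_contra h0
        have : (3:ℕ) ≤ 1 := hx 3 (by
          simp [rowP, List.mem_append, List.mem_replicate]
          omega)
        omega
      have hb : b = 0 := by
        by_contra h0
        have : (2:ℕ) ≤ 1 := hx 2 (by
          simp [rowP, List.mem_append, List.mem_replicate]
          omega)
        omega
      subst ha; subst hb
      exact ⟨0, 0, c+1, by simp [rowP, List.replicate_succ]⟩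
    · -- x = 2 : need a = 0
      have ha : a = 0 := by
        by_contra h0
        have : (3:ℕ) ≤ 2 := hx 3 (by
          simp [rowP, List.mem_append, List.mem_replicate]
          omega)
        omega
      subst ha
      exact ⟨0, b+1, c, by simp [rowP, List.replicate_succ]⟩
    · exact ⟨a+1, b, c, by simp [rowP, List.replicate_succ]⟩

/-- position `n` of the chain with parameters `m3`, `k` (as a triple of counts). -/
def posT (m3 k n : ℕ) : ℕ × ℕ × ℕ :=
  if k % 2 = 0 then
    if n ≤ k then (m3, n, 3*m3 + k - n)
    else if (n - (k+1)) % 3 = 0 then (m3 + (n - (k+1))/3, k, 3*m3 + 1)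
    else if (n - (k+1)) % 3 = 1 then (m3 + (n - (k+1))/3, k + 1, 3*m3)
    else (m3 + (n - (k+1))/3 + 1, k, 3*m3)
  else
    if n ≤ k - 2 then (m3, n, 3*m3 + k - n)
    else if (n - (k-1)) % 3 = 0 then (m3 + (n - (k-1))/3 + 1, k - 3, 3*m3 + 2)
    else if (n - (k-1)) % 3 = 1 then (m3 + (n - (k-1))/3 + 1, k - 2, 3*m3 + 1)
    else (m3 + (n - (k-1))/3 + 1, k - 2, 3*m3 + 2)

/-- length of the chain with parameters `m3`, `k` in `L(3,h)`. -/
def chLen (h m3 k : ℕ) : ℕ := 3*(h - 4*m3 - k) + k + 1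

/-- the chain with parameters `m3`, `k`. -/
def chainT (h m3 k : ℕ) : List (List ℕ) :=
  (List.range (chLen h m3 k)).map fun n =>
    rowP (posT m3 k n).1 (posT m3 k n).2.1 (posT m3 k n).2.2

lemma mem_chainT {h m3 k : ℕ} {l : List ℕ} :
    l ∈ chainT h m3 k ↔ ∃ n < chLen h m3 k,
      rowP (posT m3 k n).1 (posT m3 k n).2.1 (posT m3 k n).2.2 = l := by
  simp [chainT]

/-- The chain parameters assigned to the partition with counts `(a, b, c)`. -/
def Gm (a b c : ℕ) : ℕ :=
  if 3*a + 2 ≤ c ∨ (3*a ≤ c ∧ (b + c - 3*a) % 2 = 0) then a else c / 3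

def Gk (a b c : ℕ) : ℕ :=
  if 3*a + 2 ≤ c ∨ (3*a ≤ c ∧ (b + c - 3*a) % 2 = 0) then b + c - 3*a
  else if c % 3 = 0 then (if b % 2 = 0 then b else b - 1)
  else if c % 3 = 1 then (if b % 2 = 0 then b else b + 2)
  else (if b % 2 = 0 then b + 3 else b + 2)

-- soundness: the parameters of a chain containing `(a,b,c)` are `Gm`, `Gk`.
set_option maxHeartbeats 4000000 in
lemma posT_det {h m3 k n a b c : ℕ} (hk : k ≠ 1) (hbox : 4*m3 + k ≤ h)
    (hn : n < chLen h m3 k) (heq : posT m3 k n = (a, b, c)) :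
    Gm a b c = m3 ∧ Gk a b c = k := by
  unfold chLen at hn
  unfold posT at heq
  unfold Gm Gk
  split_ifs at heq <;>
    (rw [Prod.mk.injEq, Prod.mk.injEq] at heq; obtain ⟨h1, h2, h3⟩ := heq; subst h1; subst h2) <;>
    split_ifs <;> constructor <;> omega

-- completeness: `(a,b,c)` with `a+b+c ≤ h` lies in its assigned chain.
set_option maxHeartbeats 4000000 in
lemma G_mem {h a b c : ℕ} (hs : a + b + c ≤ h) :
    Gk a b c ≠ 1 ∧ 4 * Gm a b c + Gk a b c ≤ h ∧
      ∃ n < chLen h (Gm a b c) (Gk a b c), posT (Gm a b c) (Gk a b c) n = (a, b, c) := by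
  by_cases hd : 3*a + 2 ≤ c ∨ (3*a ≤ c ∧ (b + c - 3*a) % 2 = 0)
  · -- diagonal cases E0 / O0, n = b
    have hGm : Gm a b c = a := by unfold Gm; rw [if_pos hd]
    have hGk : Gk a b c = b + c - 3*a := by unfold Gk; rw [if_pos hd]
    rw [hGm, hGk]
    refine ⟨by omega, by omega, b, by unfold chLen; omega, ?_⟩
    unfold posT
    split_ifs <;> simp only [Prod.mk.injEq, true_and, and_true] <;> omega
  · -- strip cases, m3 = c / 3
    have hGm : Gm a b c = c / 3 := by unfold Gm; rw [if_neg hd]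
    rw [hGm]
    have hc3 : c % 3 = 0 ∨ c % 3 = 1 ∨ c % 3 = 2 := by omega
    rcases Nat.mod_two_eq_zero_or_one b with hb | hb <;> rcases hc3 with hc | hc | hc
    · -- c%3=0, b even : E3, k = b
      have hGk : Gk a b c = b := by
        unfold Gk; rw [if_neg hd, if_pos hc, if_pos hb]
      rw [hGk]
      refine ⟨by omega, by omega, b + 3*(a - c/3), by unfold chLen; omega, ?_⟩
      unfold posT; split_ifs <;> simp only [Prod.mk.injEq, true_and, and_true] <;> omega
    · -- c%3=1, b even : E1, k = b
      have hGk : Gk a b c = b := by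
        unfold Gk; rw [if_neg hd, if_neg (by omega), if_pos hc, if_pos hb]
      rw [hGk]
      refine ⟨by omega, by omega, b + 1 + 3*(a - c/3), by unfold chLen; omega, ?_⟩
      unfold posT; split_ifs <;> simp only [Prod.mk.injEq, true_and, and_true] <;> omega
    · -- c%3=2, b even : O1, k = b+3
      have hGk : Gk a b c = b + 3 := by
        unfold Gk; rw [if_neg hd, if_neg (by omega), if_neg (by omega), if_pos hb]
      rw [hGk]
      refine ⟨by omega, by omega, 3*(a - c/3) + b - 1, by unfold chLen; omega, ?_⟩
      unfold posT; split_ifs <;> simp only [Prod.mk.injEq, true_and, and_true] <;> omega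
    · -- c%3=0, b odd : E2, k = b-1
      have hGk : Gk a b c = b - 1 := by
        unfold Gk; rw [if_neg hd, if_pos hc, if_neg (by omega)]
      rw [hGk]
      refine ⟨by omega, by omega, b + 1 + 3*(a - c/3), by unfold chLen; omega, ?_⟩
      unfold posT; split_ifs <;> simp only [Prod.mk.injEq, true_and, and_true] <;> omega
    · -- c%3=1, b odd : O2, k = b+2
      have hGk : Gk a b c = b + 2 := by
        unfold Gk; rw [if_neg hd, if_neg (by omega), if_pos hc, if_neg (by omega)]
      rw [hGk]
      refine ⟨by omega, by omega, 3*(a - c/3) + b - 1, by unfold chLen; omega, ?_⟩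
      unfold posT; split_ifs <;> simp only [Prod.mk.injEq, true_and, and_true] <;> omega
    · -- c%3=2, b odd : O3, k = b+2
      have hGk : Gk a b c = b + 2 := by
        unfold Gk; rw [if_neg hd, if_neg (by omega), if_neg (by omega), if_neg (by omega)]
      rw [hGk]
      refine ⟨by omega, by omega, 3*(a - c/3) + b, by unfold chLen; omega, ?_⟩
      unfold posT; split_ifs <;> simp only [Prod.mk.injEq, true_and, and_true] <;> omega

lemma chLen_pos (h m3 k : ℕ) : 0 < chLen h m3 k := by unfold chLen; omega

lemma chainT_ne_nil (h m3 k : ℕ) : chainT h m3 k ≠ [] := by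
  have := chLen_pos h m3 k
  simp only [chainT, ne_eq, List.map_eq_nil_iff, List.range_eq_nil]
  omega

-- sum of counts at every position stays ≤ h
set_option maxHeartbeats 4000000 in
lemma posT_sum_le {h m3 k n : ℕ} (hk : k ≠ 1) (hbox : 4*m3 + k ≤ h)
    (hn : n < chLen h m3 k) :
    (posT m3 k n).1 + (posT m3 k n).2.1 + (posT m3 k n).2.2 ≤ h := by
  unfold chLen at hn
  unfold posT
  split_ifs <;> simp only <;> omega

set_option maxHeartbeats 4000000 in
lemma chainT_subset {h m3 k : ℕ} (hk : k ≠ 1) (hbox : 4*m3 + k ≤ h) :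
    ∀ l ∈ chainT h m3 k, l ∈ boxSet 3 h := by
  intro l hl
  obtain ⟨n, hn, rfl⟩ := mem_chainT.1 hl
  exact rowP_mem_box (posT_sum_le hk hbox hn)

-- consecutive positions are covering steps
set_option maxHeartbeats 8000000 in
lemma posT_step {h m3 k n : ℕ} (hk : k ≠ 1) (hbox : 4*m3 + k ≤ h)
    (hn : n + 1 < chLen h m3 k) :
    (posT m3 k n).1 ≤ (posT m3 k (n+1)).1 ∧
    (posT m3 k n).1 + (posT m3 k n).2.1 ≤ (posT m3 k (n+1)).1 + (posT m3 k (n+1)).2.1 ∧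
    (posT m3 k n).1 + (posT m3 k n).2.1 + (posT m3 k n).2.2 ≤
      (posT m3 k (n+1)).1 + (posT m3 k (n+1)).2.1 + (posT m3 k (n+1)).2.2 ∧
    3*(posT m3 k (n+1)).1 + 2*(posT m3 k (n+1)).2.1 + (posT m3 k (n+1)).2.2 =
      3*(posT m3 k n).1 + 2*(posT m3 k n).2.1 + (posT m3 k n).2.2 + 1 := by
  unfold chLen at hn
  unfold posT
  split_ifs <;> simp only <;> omega

lemma chainT_chain' {h m3 k : ℕ} (hk : k ≠ 1) (hbox : 4*m3 + k ≤ h) :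
    (chainT h m3 k).Chain' CoversBox := by
  unfold chainT List.Chain'
  rw [List.isChain_map]
  obtain ⟨M, hM⟩ : ∃ M, chLen h m3 k = M + 1 := ⟨chLen h m3 k - 1, by have := chLen_pos h m3 k; omega⟩
  rw [hM, List.isChain_range_succ]
  intro n hn
  obtain ⟨s1, s2, s3, s4⟩ := posT_step hk hbox (by omega : n + 1 < chLen h m3 k)
  exact covers_rowP s1 s2 s3 s4

lemma chainT_headI (h m3 k : ℕ) (hk : k ≠ 1) :
    (chainT h m3 k).headI = rowP m3 0 (3*m3 + k) := by
  obtain ⟨M, hM⟩ : ∃ M, chLen h m3 k = M + 1 := ⟨chLen h m3 k - 1, by have := chLen_pos h m3 k; omega⟩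
  unfold chainT
  rw [hM, List.range_succ_eq_map, List.map_cons]
  show rowP (posT m3 k 0).1 (posT m3 k 0).2.1 (posT m3 k 0).2.2 = _
  unfold posT
  split_ifs <;> simp only <;> (congr 1 <;> omega)

lemma getLastD_concat' {α : Type*} (l : List α) (x : α) (d : α) :
    (l ++ [x]).getLastD d = x := by
  simp

lemma chainT_getLastD (h m3 k : ℕ) (hk : k ≠ 1) (hbox : 4*m3 + k ≤ h) :
    (chainT h m3 k).getLastD [] =
      if k % 2 = 0 then rowP (m3 + (h - 4*m3 - k)) k (3*m3)
      else rowP (m3 + (h - 4*m3 - k) + 1) (k - 2) (3*m3 + 1) := by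
  obtain ⟨M, hM⟩ : ∃ M, chLen h m3 k = M + 1 := ⟨chLen h m3 k - 1, by have := chLen_pos h m3 k; omega⟩
  unfold chainT
  rw [hM, List.range_succ, List.map_append, List.map_singleton, getLastD_concat']
  have hMval : M = 3*(h - 4*m3 - k) + k := by unfold chLen at hM; omega
  subst hMval
  unfold posT
  split_ifs <;> simp only <;> (congr 1 <;> omega)


lemma getD_rep_append (p x : ℕ) (l : List ℕ) (i d : ℕ) :
    (List.replicate p x ++ l).getD i d = if i < p then x else l.getD (i - p) d := by
  rcases lt_or_ge i p with hi | hi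
  · rw [List.getD_append _ _ _ _ (by simpa using hi), getD_replicate' _ _ _ _ hi, if_pos hi]
  · rw [List.getD_append_right _ _ _ _ (by simpa using hi), List.length_replicate, if_neg (by omega)]

lemma quad_getD (w3 w2 w1 w0 i : ℕ) :
    (List.replicate w3 3 ++ List.replicate w2 2 ++ List.replicate w1 1 ++
      List.replicate w0 0).getD i 0 =
      if i < w3 then 3 else if i < w3 + w2 then 2 else if i < w3 + w2 + w1 then 1 else 0 := by
  rw [List.append_assoc, List.append_assoc, getD_rep_append, getD_rep_append, getD_rep_append]
  have h0 : ∀ j, (List.replicate w0 0).getD j 0 = 0 := by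
    intro j
    rcases lt_or_ge j w0 with hj | hj
    · exact getD_replicate' _ _ _ _ hj
    · exact List.getD_eq_default _ _ (by simpa using hj)
  rw [h0]
  split_ifs <;> omega

lemma complement_rowP {a b c h : ℕ} (hs : a + b + c ≤ h) :
    complementBox 3 h (rowP a b c) =
      List.replicate (h - (a+b+c)) 3 ++ List.replicate c 2 ++ List.replicate b 1 ++
        List.replicate a 0 := by
  apply List.ext_getElem
  · simp [complementBox]; omega
  · intro i hi1 hi2
    have hih : i < h := by simpa [complementBox] using hi1
    rw [← List.getD_eq_getElem _ 0, ← List.getD_eq_getElem _ 0]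
    unfold complementBox
    rw [List.getD_eq_getElem _ 0 (by simpa using hih), List.getElem_map, List.getElem_range,
      quad_getD, rowP_getD]
    split_ifs <;> omega

/-- For every h ≥ 1 there is a symmetric chain decomposition 𝒞 of
L(3,h) such that: (a) the minimal elements of its chains are exactly the partitions in
L(3,h) of the form 3^{m₃} 1^{m₁} with m₁ ≥ 3 m₃ and m₁ ≠ 3 m₃ + 1; (b) the chain with
minimal element 3^{m₃} 1^{m₁+3m₃} (m₁ ≠ 1) has maximal element
3^{h−m₁−3m₃} 2^{m₁} 1^{3m₃} if m₁ is even and 3^{h−m₁−3m₃+1} 2^{m₁−2} 1^{3m₃+1} if m₁ is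
odd; (c) the maximal elements of its chains are exactly the partitions of L(3,h) whose
complement in the 3 × h box has the form 2^{m₂} 1^{m₁} with 3 m₁ + 4 m₂ ≤ 3h,
m₁ even ↔ m₂ ≡ 0 (mod 3), and m₁ odd ↔ m₂ ≡ 1 (mod 3). -/
theorem scd_L3_min_max (h : ℕ) (hh : 1 ≤ h) :
    ∃ C : Set (List (List ℕ)),
      IsSCD 3 h C ∧
      (∀ l : List ℕ,
        (∃ c ∈ C, c.headI = l) ↔
          (l ∈ boxSet 3 h ∧ ∃ m3 m1 : ℕ,
            l = List.replicate m3 3 ++ List.replicate m1 1 ∧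
            3 * m3 ≤ m1 ∧ m1 ≠ 3 * m3 + 1)) ∧
      (∀ c ∈ C, ∀ m3 m1 : ℕ, m1 ≠ 1 →
        c.headI = List.replicate m3 3 ++ List.replicate (m1 + 3 * m3) 1 →
        (Even m1 →
          c.getLastD [] = List.replicate (h - m1 - 3 * m3) 3 ++
            List.replicate m1 2 ++ List.replicate (3 * m3) 1) ∧
        (¬ Even m1 →
          c.getLastD [] = List.replicate (h - m1 - 3 * m3 + 1) 3 ++
            List.replicate (m1 - 2) 2 ++ List.replicate (3 * m3 + 1) 1)) ∧
      (∀ l : List ℕ,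
        (∃ c ∈ C, c.getLastD [] = l) ↔
          (l ∈ boxSet 3 h ∧ ∃ m2 m1 : ℕ,
            complementBox 3 h l = List.replicate m2 2 ++ List.replicate m1 1 ++
              List.replicate (h - m2 - m1) 0 ∧
            3 * m1 + 4 * m2 ≤ 3 * h ∧
            (Even m1 ↔ m2 % 3 = 0) ∧ (¬ Even m1 ↔ m2 % 3 = 1))) := by
  classical
  refine ⟨{c | ∃ m3 k, k ≠ 1 ∧ 4*m3 + k ≤ h ∧ c = chainT h m3 k}, ⟨?_, ?_, ?_, ?_, ?_⟩, ?_, ?_, ?_⟩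
  · -- nonempty
    rintro c ⟨m3, k, hk, hb, rfl⟩
    exact chainT_ne_nil h m3 k
  · -- subset
    rintro c ⟨m3, k, hk, hb, rfl⟩
    exact chainT_subset hk hb
  · -- saturated
    rintro c ⟨m3, k, hk, hb, rfl⟩
    exact chainT_chain' hk hb
  · -- symm
    rintro c ⟨m3, k, hk, hb, rfl⟩
    rw [chainT_headI h m3 k hk, chainT_getLastD h m3 k hk hb]
    rcases Nat.mod_two_eq_zero_or_one k with hk2 | hk2
    · rw [if_pos hk2, rowP_sum, rowP_sum]; omega
    · rw [if_neg (by omega), rowP_sum, rowP_sum]; omega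
  · -- partitioned
    intro l hl
    obtain ⟨a, b, c, rfl, hs⟩ := rowP_canonical hl
    obtain ⟨hk1, hb1, n, hn, hpos⟩ := G_mem (h := h) hs
    refine ⟨chainT h (Gm a b c) (Gk a b c), ⟨⟨Gm a b c, Gk a b c, hk1, hb1, rfl⟩, ?_⟩, ?_⟩
    · exact mem_chainT.2 ⟨n, hn, by rw [hpos]⟩
    · rintro c' ⟨⟨m3', k', hk', hb', rfl⟩, hmem⟩
      obtain ⟨n', hn', heq'⟩ := mem_chainT.1 hmem
      obtain ⟨e1, e2, e3⟩ := rowP_inj heq'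
      have hp : posT m3' k' n' = (a, b, c) := by
        rw [Prod.ext_iff, Prod.ext_iff]; exact ⟨e1, e2, e3⟩
      obtain ⟨g1, g2⟩ := posT_det hk' hb' hn' hp
      rw [← g1, ← g2]
  · -- (a) minimal elements
    intro l
    constructor
    · rintro ⟨c, ⟨m3, k, hk, hb, rfl⟩, rfl⟩
      rw [chainT_headI h m3 k hk]
      refine ⟨rowP_mem_box (by omega), m3, 3*m3 + k, by simp [rowP], by omega, by omega⟩
    · rintro ⟨hbox, m3, m1, rfl, hge, hne⟩
      have hlen : m3 + m1 ≤ h := by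
        have := hbox.2.2; simpa using this
      refine ⟨chainT h m3 (m1 - 3*m3), ⟨m3, m1 - 3*m3, by omega, by omega, rfl⟩, ?_⟩
      rw [chainT_headI h m3 (m1 - 3*m3) (by omega)]
      have : 3*m3 + (m1 - 3*m3) = m1 := by omega
      rw [this]
      simp [rowP]
  · -- (b) maximal element of the chain with given head
    rintro c ⟨m3', k, hk, hb, rfl⟩ m3 m1 hm1 hhead
    rw [chainT_headI h m3' k hk] at hhead
    have hhead' : rowP m3' 0 (3*m3' + k) = rowP m3 0 (m1 + 3*m3) := by
      rw [hhead]; simp [rowP]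
    obtain ⟨e1, _, e3⟩ := rowP_inj hhead'
    subst e1
    have ek : k = m1 := by omega
    subst ek
    rw [chainT_getLastD h m3' k hk hb]
    constructor
    · intro hev
      rw [Nat.even_iff] at hev
      rw [if_pos hev]
      show _ = rowP (h - k - 3*m3') k (3*m3')
      congr 1 <;> omega
    · intro hodd
      rw [Nat.even_iff] at hodd
      rw [if_neg hodd]
      show _ = rowP (h - k - 3*m3' + 1) (k - 2) (3*m3' + 1)
      congr 1 <;> omega
  · -- (c) maximal elements
    intro l
    constructor
    · rintro ⟨c, ⟨m3, k, hk, hb, rfl⟩, rfl⟩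
      rw [chainT_getLastD h m3 k hk hb]
      rcases Nat.mod_two_eq_zero_or_one k with hk2 | hk2
      · rw [if_pos hk2]
        refine ⟨rowP_mem_box (by omega), 3*m3, k, ?_, by omega, ?_, ?_⟩
        · rw [complement_rowP (by omega)]
          have h30 : h - (m3 + (h - 4*m3 - k) + k + 3*m3) = 0 := by omega
          rw [h30]
          have ha : m3 + (h - 4*m3 - k) = h - 3*m3 - k := by omega
          rw [ha]
          simp [List.append_assoc]
        · rw [Nat.even_iff]; omega
        · rw [Nat.even_iff]; omega
      · rw [if_neg (by omega)]
        refine ⟨rowP_mem_box (by omega), 3*m3 + 1, k - 2, ?_, by omega, ?_, ?_⟩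
        · rw [complement_rowP (by omega)]
          have h30 : h - (m3 + (h - 4*m3 - k) + 1 + (k - 2) + (3*m3 + 1)) = 0 := by omega
          rw [h30]
          have ha : m3 + (h - 4*m3 - k) + 1 = h - (3*m3 + 1) - (k - 2) := by omega
          rw [ha]
          simp [List.append_assoc]
        · rw [Nat.even_iff]; omega
        · rw [Nat.even_iff]; omega
    · rintro ⟨hbox, m2, m1, hcomp, hineq, hiff0, hiff1⟩
      obtain ⟨a, b, c, rfl, hs⟩ := rowP_canonical hbox
      rw [complement_rowP hs] at hcomp
      have e3 : h - (a + b + c) = 0 := by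
        have := congrArg (List.count 3) hcomp
        simpa [List.count_append, List.count_replicate] using this
      have e2 : c = m2 := by
        have := congrArg (List.count 2) hcomp
        simpa [List.count_append, List.count_replicate] using this
      have e1 : b = m1 := by
        have := congrArg (List.count 1) hcomp
        simpa [List.count_append, List.count_replicate] using this
      have e0 : a = h - m2 - m1 := by
        have := congrArg (List.count 0) hcomp
        simpa [List.count_append, List.count_replicate] using this
      rw [Nat.even_iff] at hiff0
      rw [Nat.even_iff] at hiff1
      have hm2 : m2 % 3 = 0 ∨ m2 % 3 = 1 := by
        rcases Nat.mod_two_eq_zero_or_one m1 with hm | hm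
        · exact Or.inl (hiff0.1 hm)
        · exact Or.inr (hiff1.1 (by omega))
      rcases hm2 with hm2 | hm2
      · -- m1 even, k = m1, m3 = m2/3
        have hm1e : m1 % 2 = 0 := hiff0.2 hm2
        refine ⟨chainT h (m2/3) m1, ⟨m2/3, m1, by omega, by omega, rfl⟩, ?_⟩
        rw [chainT_getLastD h (m2/3) m1 (by omega) (by omega), if_pos hm1e]
        congr 1 <;> omega
      · -- m1 odd, k = m1 + 2, m3 = m2/3
        have hm1o : m1 % 2 = 1 := by have := hiff1.2 hm2; omega
        refine ⟨chainT h (m2/3) (m1 + 2), ⟨m2/3, m1 + 2, by omega, by omega, rfl⟩, ?_⟩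
        rw [chainT_getLastD h (m2/3) (m1 + 2) (by omega) (by omega), if_neg (by omega)]
        congr 1 <;> omega
end
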